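/- Let N be a lattice, u ∈ M = Hom(N, ℤ), and let f be an invertible element of the group algebra k[N] all of whose monomial exponents lie in the sublattice N_u := ker(u) ⊆ N (i.e., f ∈ k[N_u]^×). Then the k-linear map θ : k[N] → k[N] defined on monomials by θ(z^p) = z^p · f^{⟨u, p⟩} is a k-algebra automorphism of k[N], with inverse given by z^p ↦ z^p · f^{−⟨u, p⟩}. -/

import Mathlib

open AddMonoidAlgebra

noncomputable def wcHom {k N : Type*} [CommRing k] [AddCommGroup N]
    (u : N →+ ℤ) (f : (AddMonoidAlgebra k N)ˣ) :
    AddMonoidAlgebra k N →ₐ[k] AddMonoidAlgebra k N :=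
  AddMonoidAlgebra.lift k _ N
    { toFun := fun p => AddMonoidAlgebra.single (Multiplicative.toAdd p) (1:k) *
        ((f ^ (u (Multiplicative.toAdd p)) : (AddMonoidAlgebra k N)ˣ) : AddMonoidAlgebra k N),
      map_one' := by simp [AddMonoidAlgebra.one_def, AddMonoidAlgebra.single_mul_single],
      map_mul' := by
        intro p q
        simp only [toAdd_mul, map_add, zpow_add, Units.val_mul]
        rw [show AddMonoidAlgebra.single (Multiplicative.toAdd p + Multiplicative.toAdd q) (1:k)
            = AddMonoidAlgebra.single (Multiplicative.toAdd p) 1 *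
              AddMonoidAlgebra.single (Multiplicative.toAdd q) 1 from by
          simp [AddMonoidAlgebra.single_mul_single]]
        ring }

lemma wcHom_single {k N : Type*} [CommRing k] [AddCommGroup N]
    (u : N →+ ℤ) (f : (AddMonoidAlgebra k N)ˣ) (p : N) (c : k) :
    wcHom u f (AddMonoidAlgebra.single p c) =
      AddMonoidAlgebra.single p c *
        ((f ^ (u p) : (AddMonoidAlgebra k N)ˣ) : AddMonoidAlgebra k N) := by
  rw [wcHom, AddMonoidAlgebra.lift_single]
  simp only [MonoidHom.coe_mk, OneHom.coe_mk, toAdd_ofAdd]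
  rw [← smul_mul_assoc, AddMonoidAlgebra.smul_single', mul_one]

lemma wcHom_fix {k N : Type*} [CommRing k] [AddCommGroup N]
    (u : N →+ ℤ) (f : (AddMonoidAlgebra k N)ˣ)
    (hf : ∀ n ∈ (f : AddMonoidAlgebra k N).coeff.support, u n = 0) (m : ℤ) :
    wcHom u f ((f ^ m : (AddMonoidAlgebra k N)ˣ) : AddMonoidAlgebra k N) =
      ((f ^ m : (AddMonoidAlgebra k N)ˣ) : AddMonoidAlgebra k N) := by
  set φ : AddMonoidAlgebra k N →* AddMonoidAlgebra k N :=
    ((wcHom u f : AddMonoidAlgebra k N →+* AddMonoidAlgebra k N) :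
      AddMonoidAlgebra k N →* AddMonoidAlgebra k N) with hφ
  have h1 : Units.map φ f = f := by
    refine Units.ext ?_
    show wcHom u f (f : AddMonoidAlgebra k N) = f
    conv_lhs => rw [← AddMonoidAlgebra.sum_coeff_single ((f : AddMonoidAlgebra k N))]
    rw [map_finsuppSum]
    refine (Finsupp.sum_congr
      (fun n hn => by rw [wcHom_single, hf n hn, zpow_zero, Units.val_one, mul_one])).trans
      (AddMonoidAlgebra.sum_coeff_single _)
  have h2 : Units.map φ (f ^ m) = f ^ m := by rw [map_zpow, h1]
  calc wcHom u f ((f ^ m : (AddMonoidAlgebra k N)ˣ) : AddMonoidAlgebra k N)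
      = ((Units.map φ (f ^ m) : (AddMonoidAlgebra k N)ˣ) : AddMonoidAlgebra k N) := rfl
    _ = _ := by rw [h2]

lemma wcHom_comp {k N : Type*} [CommRing k] [AddCommGroup N]
    (u v : N →+ ℤ) (f : (AddMonoidAlgebra k N)ˣ)
    (hf : ∀ n ∈ (f : AddMonoidAlgebra k N).coeff.support, u n = 0)
    (huv : ∀ p, u p + v p = 0) :
    (wcHom u f).comp (wcHom v f) = AlgHom.id k (AddMonoidAlgebra k N) := by
  refine AddMonoidAlgebra.algHom_ext (fun p => ?_) (Subsingleton.elim _ _)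
  rw [AlgHom.coe_comp, Function.comp_apply, wcHom_single, map_mul, wcHom_single,
    wcHom_fix u f hf, mul_assoc, ← Units.val_mul, ← zpow_add]
  rw [show u p + v p = 0 from huv p, zpow_zero, Units.val_one, mul_one, AlgHom.coe_id, id_eq]

/-- Wall-crossing automorphism: for `u ∈ Hom(N,ℤ)` and a unit `f` of `k[N]` supported
on `ker u`, the map `z^p ↦ z^p f^{⟨u,p⟩}` is a `k`-algebra automorphism of `k[N]`
with inverse `z^p ↦ z^p f^{-⟨u,p⟩}`. -/
theorem wall_crossing_automorphism
    (k N : Type*) [CommRing k] [AddCommGroup N] [Module.Free ℤ N] [Module.Finite ℤ N]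
    (u : N →+ ℤ) (f : (AddMonoidAlgebra k N)ˣ)
    (hf : ∀ n ∈ (f : AddMonoidAlgebra k N).coeff.support, u n = 0) :
    ∃ θ : AddMonoidAlgebra k N ≃ₐ[k] AddMonoidAlgebra k N,
      (∀ p : N, θ (AddMonoidAlgebra.single p 1) =
        AddMonoidAlgebra.single p (1 : k) *
          ((f ^ (u p) : (AddMonoidAlgebra k N)ˣ) : AddMonoidAlgebra k N)) ∧
      (∀ p : N, θ.symm (AddMonoidAlgebra.single p 1) =
        AddMonoidAlgebra.single p (1 : k) *
          ((f ^ (-(u p)) : (AddMonoidAlgebra k N)ˣ) : AddMonoidAlgebra k N)) := by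
  have hf' : ∀ n ∈ (f : AddMonoidAlgebra k N).coeff.support, (-u) n = 0 := by
    intro n hn; simp [hf n hn]
  refine ⟨AlgEquiv.ofAlgHom (wcHom u f) (wcHom (-u) f)
    (wcHom_comp u (-u) f hf (fun p => by simp))
    (wcHom_comp (-u) u f hf' (fun p => by simp)), fun p => ?_, fun p => ?_⟩
  · exact wcHom_single u f p 1
  · show wcHom (-u) f _ = _
    rw [wcHom_single]
    simp
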